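/- Define N_d(X, δ) as the maximum cardinality of a subset of the closed ball of radius X in ℝ^d all of whose pairwise distances are at least δ away from every integer. Then for every d ≥ 1, δ ∈ (0, 1/2), and X > 0, one has N_{d+1}(X, δ) ≤ ⌈4X/δ⌉ · N_d(X, δ/2). -/

import Mathlib

/-- Distance from a real number to the nearest integer. -/
noncomputable def nearestIntDist (t : ℝ) : ℝ := |t - round t|

/-- `N d X δ` is the maximum cardinality of a subset of the closed ball of radius `X`
in `ℝ^d` all of whose pairwise distances are at least `δ` away from every integer. -/
noncomputable def maxNearIntAvoiding (d : ℕ) (X δ : ℝ) : ℕ :=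
  sSup {n : ℕ | ∃ P : Finset (EuclideanSpace ℝ (Fin d)), P.card = n ∧
    (∀ p ∈ P, p ∈ Metric.closedBall (0 : EuclideanSpace ℝ (Fin d)) X) ∧
    (∀ p ∈ P, ∀ q ∈ P, p ≠ q → δ ≤ nearestIntDist (dist p q))}

lemma nearestIntDist_le_abs (t : ℝ) : nearestIntDist t ≤ |t| := by
  simpa [nearestIntDist] using round_le t 0

lemma nearestIntDist_le_add (s t : ℝ) :
    nearestIntDist s ≤ nearestIntDist t + |s - t| := by
  have h1 : |s - round s| ≤ |s - round t| := round_le s (round t)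
  have h2 : |s - (round t : ℝ)| = |(s - t) + (t - round t)| := by ring_nf
  have h3 : |(s - t) + (t - round t)| ≤ |s - t| + |t - round t| := abs_add_le _ _
  unfold nearestIntDist
  calc |s - round s| ≤ |s - (round t : ℝ)| := h1
    _ ≤ |s - t| + |t - round t| := by rw [h2]; exact h3
    _ = |t - round t| + |s - t| := by ring

lemma bddAbove_maxNearIntAvoiding_set (d : ℕ) (X δ : ℝ) (hδ : 0 < δ) :
    BddAbove {n : ℕ | ∃ P : Finset (EuclideanSpace ℝ (Fin d)), P.card = n ∧
      (∀ p ∈ P, p ∈ Metric.closedBall (0 : EuclideanSpace ℝ (Fin d)) X) ∧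
      (∀ p ∈ P, ∀ q ∈ P, p ≠ q → δ ≤ nearestIntDist (dist p q))} := by
  classical
  obtain ⟨t, htf, hcov⟩ := (Metric.totallyBounded_iff.mp
    (isCompact_closedBall (0 : EuclideanSpace ℝ (Fin d)) X).totallyBounded) (δ/2)
    (by linarith)
  refine ⟨htf.toFinset.card, ?_⟩
  rintro n ⟨P, rfl, hball, hsep⟩
  have hmem : ∀ p : EuclideanSpace ℝ (Fin d), ∃ y, p ∈ P →
      (y ∈ t ∧ p ∈ Metric.ball y (δ/2)) := by
    intro p
    by_cases hp : p ∈ P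
    · have := hcov (hball p hp)
      simp only [Set.mem_iUnion] at this
      obtain ⟨y, hy, hby⟩ := this
      exact ⟨y, fun _ => ⟨hy, hby⟩⟩
    · exact ⟨0, fun h => absurd h hp⟩
  choose f hf using hmem
  apply Finset.card_le_card_of_injOn f
  · intro p hp
    simpa [Set.Finite.mem_toFinset] using (hf p hp).1
  · intro p hp q hq hfe
    simp only [Finset.mem_coe] at hp hq
    by_contra hne
    have h1 := Metric.mem_ball.mp (hf p hp).2
    have h2 := Metric.mem_ball.mp (hf q hq).2
    have hd : dist p q < δ := by
      have := dist_triangle p (f q) q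
      rw [hfe] at h1
      have h2' : dist (f q) q < δ/2 := by rwa [dist_comm]
      linarith
    have hsep' := hsep p hp q hq hne
    have hle : nearestIntDist (dist p q) ≤ dist p q := by
      simpa [abs_of_nonneg dist_nonneg] using nearestIntDist_le_abs (dist p q)
    linarith

lemma coord_le_norm {n : ℕ} (p : EuclideanSpace ℝ (Fin n)) (i : Fin n) : |p i| ≤ ‖p‖ := by
  rw [EuclideanSpace.norm_eq, ← Real.sqrt_sq_eq_abs]
  apply Real.sqrt_le_sqrt
  have := Finset.single_le_sum (f := fun j => ‖p j‖ ^ 2)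
    (fun j _ => sq_nonneg _) (Finset.mem_univ i)
  simpa [sq_abs] using this

theorem stmt5 (d : ℕ) (hd : 1 ≤ d) (δ X : ℝ) (hδ : δ ∈ Set.Ioo (0:ℝ) (1/2)) (hX : 0 < X) :
    maxNearIntAvoiding (d+1) X δ ≤ ⌈4 * X / δ⌉₊ * maxNearIntAvoiding d X (δ/2) := by
  classical
  obtain ⟨hδ0, hδh⟩ := hδ
  set M := ⌈4 * X / δ⌉₊ with hMdef
  have hM0 : 0 < M := Nat.ceil_pos.mpr (by positivity)
  have hMle : (4 * X / δ : ℝ) ≤ M := Nat.le_ceil _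
  set B := maxNearIntAvoiding d X (δ/2) with hBdef
  -- projection to first d coordinates
  set π : EuclideanSpace ℝ (Fin (d+1)) → EuclideanSpace ℝ (Fin d) :=
    fun p => WithLp.toLp 2 (fun i : Fin d => p i.castSucc) with hπdef
  -- key geometric facts
  have hdist : ∀ p q : EuclideanSpace ℝ (Fin (d+1)),
      dist p q = Real.sqrt (dist (π p) (π q) ^ 2 +
        (p (Fin.last d) - q (Fin.last d)) ^ 2) := by
    intro p q
    rw [EuclideanSpace.dist_eq, EuclideanSpace.dist_eq]
    rw [Real.sq_sqrt (Finset.sum_nonneg fun i _ => sq_nonneg _)]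
    rw [Fin.sum_univ_castSucc]
    congr 1
    simp [Real.dist_eq, sq_abs, hπdef]
  have hproj_le : ∀ p q : EuclideanSpace ℝ (Fin (d+1)),
      dist (π p) (π q) ≤ dist p q := by
    intro p q
    rw [hdist p q]
    calc dist (π p) (π q) = Real.sqrt (dist (π p) (π q) ^ 2) := by
          rw [Real.sqrt_sq dist_nonneg]
      _ ≤ _ := Real.sqrt_le_sqrt (by nlinarith [sq_nonneg (p (Fin.last d) - q (Fin.last d))])
  have hle_proj : ∀ p q : EuclideanSpace ℝ (Fin (d+1)),
      dist p q ≤ dist (π p) (π q) + |p (Fin.last d) - q (Fin.last d)| := by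
    intro p q
    rw [hdist p q]
    have h1 : dist (π p) (π q) ^ 2 + (p (Fin.last d) - q (Fin.last d)) ^ 2 ≤
        (dist (π p) (π q) + |p (Fin.last d) - q (Fin.last d)|) ^ 2 := by
      have : (0:ℝ) ≤ dist (π p) (π q) * |p (Fin.last d) - q (Fin.last d)| :=
        mul_nonneg dist_nonneg (abs_nonneg _)
      nlinarith [sq_abs (p (Fin.last d) - q (Fin.last d))]
    calc Real.sqrt _ ≤ Real.sqrt ((dist (π p) (π q) +
          |p (Fin.last d) - q (Fin.last d)|) ^ 2) := Real.sqrt_le_sqrt h1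
      _ = _ := Real.sqrt_sq (add_nonneg dist_nonneg (abs_nonneg _))
  -- bound the supremum
  have hS0 : ({n : ℕ | ∃ P : Finset (EuclideanSpace ℝ (Fin (d+1))), P.card = n ∧
      (∀ p ∈ P, p ∈ Metric.closedBall (0 : EuclideanSpace ℝ (Fin (d+1))) X) ∧
      (∀ p ∈ P, ∀ q ∈ P, p ≠ q → δ ≤ nearestIntDist (dist p q))}).Nonempty :=
    ⟨0, ∅, by simp⟩
  apply csSup_le hS0
  rintro n ⟨P, rfl, hball, hsep⟩
  -- slab index
  set g : EuclideanSpace ℝ (Fin (d+1)) → ℝ :=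
    fun p => (p (Fin.last d) + X) / (δ/2) with hgdef
  set f : EuclideanSpace ℝ (Fin (d+1)) → ℕ := fun p => min ⌊g p⌋₊ (M-1) with hfdef
  have hgrange : ∀ p ∈ P, 0 ≤ g p ∧ g p ≤ (M:ℝ) := by
    intro p hp
    have h1 : |p (Fin.last d)| ≤ X := by
      have := coord_le_norm p (Fin.last d)
      have hn : ‖p‖ ≤ X := by
        simpa [dist_zero_right] using Metric.mem_closedBall.mp (hball p hp)
      linarith
    have h1a : -X ≤ p (Fin.last d) := (abs_le.mp h1).1
    have h1b : p (Fin.last d) ≤ X := (abs_le.mp h1).2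
    constructor
    · apply div_nonneg (by linarith) (by linarith)
    · have : g p ≤ 4 * X / δ := by
        rw [hgdef]
        rw [div_le_div_iff₀ (by linarith) hδ0]
        ring_nf
        nlinarith
      linarith
  have hgk : ∀ p ∈ P, (f p : ℝ) ≤ g p ∧ g p ≤ (f p : ℝ) + 1 := by
    intro p hp
    obtain ⟨hg0, hgM⟩ := hgrange p hp
    constructor
    · calc (f p : ℝ) ≤ (⌊g p⌋₊ : ℝ) := by exact_mod_cast Nat.min_le_left _ _
        _ ≤ g p := Nat.floor_le hg0
    · rcases le_or_gt ⌊g p⌋₊ (M-1) with h | h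
      · have hfp : f p = ⌊g p⌋₊ := min_eq_left h
        rw [hfp]
        exact le_of_lt (Nat.lt_floor_add_one _)
      · have hfp : f p = M - 1 := min_eq_right (le_of_lt h)
        rw [hfp]
        have : ((M - 1 : ℕ) : ℝ) = (M : ℝ) - 1 := by
          rw [Nat.cast_sub hM0]; simp
        rw [this]
        linarith
  have hclose : ∀ p ∈ P, ∀ q ∈ P, f p = f q →
      |p (Fin.last d) - q (Fin.last d)| ≤ δ/2 := by
    intro p hp q hq hfe
    obtain ⟨hp1, hp2⟩ := hgk p hp
    obtain ⟨hq1, hq2⟩ := hgk q hq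
    rw [hfe] at hp1 hp2
    have hgd : |g p - g q| ≤ 1 := abs_le.mpr ⟨by linarith, by linarith⟩
    have : p (Fin.last d) - q (Fin.last d) = (g p - g q) * (δ/2) := by
      rw [hgdef]; field_simp; ring
    rw [this, abs_mul, abs_of_pos (by linarith : (0:ℝ) < δ/2)]
    nlinarith [abs_nonneg (g p - g q)]
  have hfM : ∀ p ∈ P, f p < M := by
    intro p _
    exact lt_of_le_of_lt (Nat.min_le_right _ _) (Nat.sub_lt hM0 one_pos)
  -- fiberwise count
  rw [Finset.card_eq_sum_card_fiberwise (f := f) (t := Finset.range M)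
    (fun p hp => Finset.mem_range.mpr (hfM p hp))]
  have hfiber : ∀ i ∈ Finset.range M, (P.filter (fun p => f p = i)).card ≤ B := by
    intro i _
    set Q := P.filter (fun p => f p = i) with hQdef
    have hQsub : ∀ p ∈ Q, p ∈ P := fun p hp => (Finset.mem_filter.mp hp).1
    have hQf : ∀ p ∈ Q, f p = i := fun p hp => (Finset.mem_filter.mp hp).2
    -- π is injective on Q
    have hinj : (↑Q : Set (EuclideanSpace ℝ (Fin (d+1)))).InjOn π := by
      intro p hp q hq hpq
      simp only [Finset.mem_coe] at hp hq
      by_contra hne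
      have hdpq : dist p q = |p (Fin.last d) - q (Fin.last d)| := by
        rw [hdist p q, hpq]
        simp [Real.sqrt_sq_eq_abs]
      have hc := hclose p (hQsub p hp) q (hQsub q hq)
        ((hQf p hp).trans (hQf q hq).symm)
      have hsep' := hsep p (hQsub p hp) q (hQsub q hq) hne
      have hle : nearestIntDist (dist p q) ≤ dist p q := by
        simpa [abs_of_nonneg dist_nonneg] using nearestIntDist_le_abs (dist p q)
      linarith
    have hcardQ : (Q.image π).card = Q.card := Finset.card_image_of_injOn hinj
    -- the image satisfies the d-dimensional conditions with δ/2
    have hmemS : Q.card ∈ {n : ℕ | ∃ P : Finset (EuclideanSpace ℝ (Fin d)), P.card = n ∧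
        (∀ p ∈ P, p ∈ Metric.closedBall (0 : EuclideanSpace ℝ (Fin d)) X) ∧
        (∀ p ∈ P, ∀ q ∈ P, p ≠ q → δ/2 ≤ nearestIntDist (dist p q))} := by
      refine ⟨Q.image π, hcardQ, ?_, ?_⟩
      · intro p' hp'
        obtain ⟨p, hp, rfl⟩ := Finset.mem_image.mp hp'
        have hn : ‖p‖ ≤ X := by
          simpa [dist_zero_right] using Metric.mem_closedBall.mp (hball p (hQsub p hp))
        have : ‖π p‖ ≤ ‖p‖ := by
          rw [EuclideanSpace.norm_eq, EuclideanSpace.norm_eq]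
          apply Real.sqrt_le_sqrt
          rw [Fin.sum_univ_castSucc]
          have : (0:ℝ) ≤ ‖p (Fin.last d)‖ ^ 2 := sq_nonneg _
          simp only [hπdef, WithLp.ofLp_toLp]
          linarith
        rw [Metric.mem_closedBall, dist_zero_right]
        linarith
      · intro p' hp' q' hq' hne'
        obtain ⟨p, hp, rfl⟩ := Finset.mem_image.mp hp'
        obtain ⟨q, hq, rfl⟩ := Finset.mem_image.mp hq'
        have hne : p ≠ q := fun h => hne' (by rw [h])
        have hsep' := hsep p (hQsub p hp) q (hQsub q hq) hne
        have hc := hclose p (hQsub p hp) q (hQsub q hq)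
          ((hQf p hp).trans (hQf q hq).symm)
        have h1 := hproj_le p q
        have h2 := hle_proj p q
        have h3 := nearestIntDist_le_add (dist p q) (dist (π p) (π q))
        have h4 : |dist p q - dist (π p) (π q)| ≤ δ/2 := by
          rw [abs_of_nonneg (by linarith)]
          linarith
        linarith
    calc Q.card ≤ maxNearIntAvoiding d X (δ/2) :=
          le_csSup (bddAbove_maxNearIntAvoiding_set d X (δ/2) (by linarith)) hmemS
      _ = B := rfl
  calc ∑ i ∈ Finset.range M, (P.filter (fun p => f p = i)).card
      ≤ ∑ _i ∈ Finset.range M, B := Finset.sum_le_sum hfiber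
    _ = M * B := by simp [mul_comm]
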